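/- Let X be a nonempty compact topological space with a Borel probability measure μ, let f_* = (f_i)_{i≥1} be a sequence of μ-preserving homeomorphisms of X, and let F be an α-quasi-integral of f_* for some α ∈ (0,1]. Then for every c ∈ (0, α), the set A_c = {x ∈ X : F(x) ≥ c·max_X F} satisfies R(f_*, A_c) ≥ (α − c)/(1 − c). -/

import Mathlib

open MeasureTheory Filter
open scoped Classical

/-- The evolution of a sequential system: `f^{(0)} = id`, `f^{(i)} = f_i ∘ ⋯ ∘ f_1`. -/
def seqEvol {X : Type*} [TopologicalSpace X] (f : ℕ → X ≃ₜ X) : ℕ → X → X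
  | 0 => id
  | i + 1 => (f (i + 1)) ∘ seqEvol f i

/-- `ν_{N,A}(x)`: the number of indices `0 ≤ i ≤ N−1` with `f^{(i)}(x) ∈ A`. -/
noncomputable def nuCount {X : Type*} [TopologicalSpace X] (f : ℕ → X ≃ₜ X)
    (A : Set X) (N : ℕ) (x : X) : ℕ :=
  ((Finset.range N).filter fun i => seqEvol f i x ∈ A).card

/-- `R(f_*, A) = limsup_{N→∞} sup_x ν_{N,A}(x)/N`. -/
noncomputable def Rrec {X : Type*} [TopologicalSpace X] (f : ℕ → X ≃ₜ X)
    (A : Set X) : ℝ :=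
  limsup (fun N : ℕ => ⨆ x : X, (nuCount f A N x : ℝ) / N) atTop

lemma seqEvol_measurePreserving {X : Type*} [TopologicalSpace X]
    [MeasurableSpace X] [BorelSpace X] (μ : Measure X)
    (f : ℕ → X ≃ₜ X) (hf : ∀ i : ℕ, MeasurePreserving (f i) μ μ) :
    ∀ i : ℕ, MeasurePreserving (seqEvol f i) μ μ := by
  intro i
  induction i with
  | zero => exact MeasurePreserving.id μ
  | succ n ih => exact (hf (n + 1)).comp ih

/-- if `F` is an `α`-quasi-integral of the sequential system `f_*`, then for
every `c ∈ (0, α)` the super-level set `A_c = {F ≥ c·max F}` satisfies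
`R(f_*, A_c) ≥ (α − c)/(1 − c)`. -/
theorem stmt_17 {X : Type*} [TopologicalSpace X] [CompactSpace X] [Nonempty X]
    [MeasurableSpace X] [BorelSpace X] (μ : Measure X) [IsProbabilityMeasure μ]
    (f : ℕ → X ≃ₜ X) (hf : ∀ i : ℕ, MeasurePreserving (f i) μ μ)
    (F : C(X, ℝ)) (hFmean : ∫ x, F x ∂μ = 0) (hF0 : ∃ x : X, F x ≠ 0)
    (α : ℝ) (hα : α ∈ Set.Ioc (0 : ℝ) 1)
    (hquasi : α * (⨆ x : X, F x) ≤
      limsup (fun N : ℕ => ⨆ x : X,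
        (1 / (N : ℝ)) * ∑ i ∈ Finset.range N, F (seqEvol f i x)) atTop)
    (c : ℝ) (hc : c ∈ Set.Ioo (0 : ℝ) α) :
    (α - c) / (1 - c) ≤ Rrec f {x : X | c * (⨆ y : X, F y) ≤ F x} := by
  obtain ⟨hα0, hα1⟩ := hα
  obtain ⟨hc0, hcα⟩ := hc
  have hc1 : c < 1 := lt_of_lt_of_le hcα hα1
  have h1c : (0:ℝ) < 1 - c := by linarith
  set M : ℝ := ⨆ y : X, F y with hM
  set A : Set X := {x : X | c * M ≤ F x} with hA
  set u : ℕ → ℝ := fun N => ⨆ x : X, (nuCount f A N x : ℝ) / N with hu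
  -- basic facts
  have hFbdd : BddAbove (Set.range fun x : X => F x) :=
    (isCompact_range F.continuous).bddAbove
  have hFleM : ∀ x : X, F x ≤ M := fun x => le_ciSup hFbdd x
  have hFint : Integrable (fun x => F x) μ :=
    integrableOn_univ.mp (F.continuous.locallyIntegrable.integrableOn_isCompact isCompact_univ)
  have hM0 : 0 ≤ M := by
    have h := integral_mono hFint (integrable_const M) hFleM
    rw [hFmean, integral_const] at h
    simpa using h
  -- ν/N bounds
  have hnuN : ∀ N : ℕ, ∀ x : X, nuCount f A N x ≤ N := fun N x =>
    (Finset.card_filter_le _ _).trans_eq (Finset.card_range N)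
  have hnu_le : ∀ N : ℕ, ∀ x : X, (nuCount f A N x : ℝ) / N ≤ 1 := by
    intro N x
    rcases Nat.eq_zero_or_pos N with h | h
    · simp [h]
    · rw [div_le_one (by exact_mod_cast h)]
      exact_mod_cast hnuN N x
  have hnu_bdd : ∀ N : ℕ, BddAbove (Set.range fun x : X => (nuCount f A N x : ℝ) / N) := by
    intro N
    exact ⟨1, by rintro _ ⟨x, rfl⟩; exact hnu_le N x⟩
  have hu_le1 : ∀ N, u N ≤ 1 := fun N => ciSup_le fun x => hnu_le N x
  -- A is measurable
  have hAmeas : MeasurableSet A := by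
    have : IsClosed A := isClosed_le continuous_const F.continuous
    exact this.measurableSet
  have hr1 : (α - c) / (1 - c) ≤ 1 := by
    rw [div_le_one h1c]; linarith
  rcases eq_or_lt_of_le hM0 with hMeq | hMpos
  · -- Case M = 0 : F ≤ 0, F = 0 a.e., some point has its whole orbit in A
    have hFle0 : ∀ x, F x ≤ 0 := fun x => (hFleM x).trans_eq hMeq.symm
    have hae : ∀ᵐ x ∂μ, F x = 0 := by
      have h1 : 0 ≤ᵐ[μ] fun x => -F x := Eventually.of_forall fun x => by
        simpa using hFle0 x
      have h2 : ∫ x, -F x ∂μ = 0 := by rw [integral_neg, hFmean, neg_zero]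
      have := (integral_eq_zero_iff_of_nonneg_ae h1 hFint.neg).mp h2
      filter_upwards [this] with x hx
      simpa using hx.symm
    have hmuAc : μ Aᶜ = 0 := by
      refine measure_mono_null ?_ (ae_iff.mp hae)
      intro x hx
      simp only [Set.mem_compl_iff, hA, Set.mem_setOf_eq, not_le] at hx
      rw [← hMeq, mul_zero] at hx
      exact ne_of_lt hx
    have hmuA : ∀ i : ℕ, μ ((seqEvol f i) ⁻¹' Aᶜ) = 0 := by
      intro i
      rw [(seqEvol_measurePreserving μ f hf i).measure_preimage
        hAmeas.compl.nullMeasurableSet]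
      exact hmuAc
    have huN : ∀ N : ℕ, 1 ≤ N → u N = 1 := by
      intro N hN
      have hB : μ (⋃ i : ℕ, (seqEvol f i) ⁻¹' Aᶜ) = 0 := measure_iUnion_null hmuA
      have hBne : (⋂ i : ℕ, (seqEvol f i) ⁻¹' A).Nonempty := by
        by_contra h
        rw [Set.not_nonempty_iff_eq_empty] at h
        have huniv : (⋃ i : ℕ, (seqEvol f i) ⁻¹' Aᶜ) = Set.univ := by
          rw [Set.eq_univ_iff_forall]
          intro x
          have hx : x ∉ ⋂ i : ℕ, (seqEvol f i) ⁻¹' A := by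
            rw [h]; exact Set.notMem_empty x
          simp only [Set.mem_iInter, not_forall] at hx
          obtain ⟨i, hi⟩ := hx
          exact Set.mem_iUnion.mpr ⟨i, hi⟩
        rw [huniv] at hB
        simp at hB
      obtain ⟨x0, hx0⟩ := hBne
      have hx0' : ∀ i, seqEvol f i x0 ∈ A := fun i => Set.mem_iInter.mp hx0 i
      have hcard : nuCount f A N x0 = N := by
        unfold nuCount
        rw [Finset.filter_true_of_mem (fun i _ => hx0' i), Finset.card_range]
      refine le_antisymm (hu_le1 N) ?_
      have h1 : (nuCount f A N x0 : ℝ) / N = 1 := by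
        rw [hcard, div_self (Nat.cast_ne_zero.mpr (by omega))]
      calc (1:ℝ) = (nuCount f A N x0 : ℝ) / N := h1.symm
        _ ≤ u N := le_ciSup (hnu_bdd N) x0
    have hR1 : Rrec f A = 1 := by
      have heq : (fun N : ℕ => ⨆ x : X, (nuCount f A N x : ℝ) / N) =ᶠ[atTop]
          fun _ => (1:ℝ) := by
        filter_upwards [eventually_ge_atTop 1] with N hN
        exact huN N hN
      rw [Rrec, limsup_congr heq, limsup_const]
    rw [hR1]; exact hr1
  · -- Case M > 0
    by_contra hcon
    push_neg at hcon
    set r : ℝ := (α - c) / (1 - c) with hr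
    have hub : IsBoundedUnder (· ≤ ·) atTop u := isBoundedUnder_of ⟨1, hu_le1⟩
    obtain ⟨b, hLb, hbr⟩ := exists_between hcon
    have hev : ∀ᶠ N in atTop, u N < b := eventually_lt_of_limsup_lt hLb hub
    have h1cM : (0:ℝ) ≤ (1 - c) * M := le_of_lt (mul_pos h1c hMpos)
    -- pointwise sum estimate
    have hkey : ∀ N : ℕ, 1 ≤ N → ∀ x : X,
        (1 / (N : ℝ)) * ∑ i ∈ Finset.range N, F (seqEvol f i x)
          ≤ c * M + (1 - c) * M * ((nuCount f A N x : ℝ) / N) := by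
      intro N hN x
      have hNpos : (0:ℝ) < N := by exact_mod_cast hN
      have hN0 : (N:ℝ) ≠ 0 := ne_of_gt hNpos
      set ν : ℕ := nuCount f A N x with hν
      have hν' : ((Finset.range N).filter (fun i => seqEvol f i x ∈ A)).card = ν := rfl
      have hνN : ν ≤ N := hnuN N x
      have hsum : ∑ i ∈ Finset.range N, F (seqEvol f i x)
          ≤ (ν:ℝ) * M + ((N:ℝ) - ν) * (c * M) := by
        have hsplit := (Finset.sum_filter_add_sum_filter_not (Finset.range N)
          (fun i => seqEvol f i x ∈ A) (fun i => F (seqEvol f i x))).symm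
        rw [hsplit]
        have h1 : ∑ i ∈ (Finset.range N).filter (fun i => seqEvol f i x ∈ A),
            F (seqEvol f i x) ≤ (ν:ℝ) * M := by
          calc _ ≤ ∑ _i ∈ (Finset.range N).filter (fun i => seqEvol f i x ∈ A), M :=
                Finset.sum_le_sum fun i _ => hFleM _
            _ = (ν:ℝ) * M := by rw [Finset.sum_const, nsmul_eq_mul, hν']
        have hcard2 : ((Finset.range N).filter (fun i => ¬ seqEvol f i x ∈ A)).card
            = N - ν := by
          have h3 := Finset.card_filter_add_card_filter_not (s := Finset.range N)
            (p := fun i => seqEvol f i x ∈ A)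
          rw [Finset.card_range] at h3
          omega
        have h2 : ∑ i ∈ (Finset.range N).filter (fun i => ¬ seqEvol f i x ∈ A),
            F (seqEvol f i x) ≤ ((N:ℝ) - ν) * (c * M) := by
          have hcm : (0:ℝ) ≤ c * M := le_of_lt (mul_pos hc0 hMpos)
          calc ∑ i ∈ (Finset.range N).filter (fun i => ¬ seqEvol f i x ∈ A),
                F (seqEvol f i x)
              ≤ ∑ _i ∈ (Finset.range N).filter (fun i => ¬ seqEvol f i x ∈ A), c * M :=
                Finset.sum_le_sum fun i hi => by
                  have hni : ¬ seqEvol f i x ∈ A := (Finset.mem_filter.mp hi).2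
                  simp only [hA, Set.mem_setOf_eq, not_le] at hni
                  exact hni.le
            _ = ((N - ν : ℕ) : ℝ) * (c * M) := by
                rw [Finset.sum_const, nsmul_eq_mul, hcard2]
            _ = ((N:ℝ) - ν) * (c * M) := by rw [Nat.cast_sub hνN]
        exact add_le_add h1 h2
      have h3 : (c * M + (1 - c) * M * ((ν:ℝ) / N)) * N
          = (ν:ℝ) * M + ((N:ℝ) - ν) * (c * M) := by
        field_simp
        ring
      rw [one_div, ← div_eq_inv_mul, div_le_iff₀ hNpos, h3]
      exact hsum
    -- eventual bound on the averages sequence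
    set v : ℕ → ℝ := fun N => ⨆ x : X,
      (1 / (N : ℝ)) * ∑ i ∈ Finset.range N, F (seqEvol f i x) with hv
    have hevv : ∀ᶠ N in atTop, v N ≤ c * M + (1 - c) * M * b := by
      filter_upwards [hev, eventually_ge_atTop 1] with N hbN hN
      refine ciSup_le fun x => ?_
      calc (1 / (N : ℝ)) * ∑ i ∈ Finset.range N, F (seqEvol f i x)
          ≤ c * M + (1 - c) * M * ((nuCount f A N x : ℝ) / N) := hkey N hN x
        _ ≤ c * M + (1 - c) * M * (u N) :=
            add_le_add_right (mul_le_mul_of_nonneg_left (le_ciSup (hnu_bdd N) x) h1cM) _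
        _ ≤ c * M + (1 - c) * M * b :=
            add_le_add_right (mul_le_mul_of_nonneg_left hbN.le h1cM) _
    -- v is bounded below
    obtain ⟨x1, -, hx1⟩ := isCompact_univ.exists_isMinOn Set.univ_nonempty F.continuous.continuousOn
    set m : ℝ := F x1 with hm
    have hmle : ∀ x : X, m ≤ F x := fun x => hx1 (Set.mem_univ x)
    have hm0 : m ≤ 0 := by
      have h2 : ∫ _x : X, m ∂μ = m := by rw [integral_const]; simp
      have h3 : ∫ _x : X, m ∂μ ≤ ∫ x, F x ∂μ := integral_mono (integrable_const m) hFint hmle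
      rw [hFmean, h2] at h3; exact h3
    have hvlb : ∀ N : ℕ, m ≤ v N := by
      intro N
      rcases Nat.eq_zero_or_pos N with h | h
      · subst h
        have hz : v 0 = ⨆ _x : X, (0:ℝ) := by
          simp [hv]
        rw [hz, ciSup_const]; exact hm0
      · have hNpos : (0:ℝ) < N := by exact_mod_cast h
        set x0 := Classical.arbitrary X
        have h1 : m ≤ (1 / (N : ℝ)) * ∑ i ∈ Finset.range N, F (seqEvol f i x0) := by
          have hs : m * N ≤ ∑ i ∈ Finset.range N, F (seqEvol f i x0) := by
            calc m * N = ∑ _i ∈ Finset.range N, m := by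
                  rw [Finset.sum_const, nsmul_eq_mul, Finset.card_range]; ring
              _ ≤ _ := Finset.sum_le_sum fun i _ => hmle _
          rw [one_div, ← div_eq_inv_mul, le_div_iff₀ hNpos]
          linarith
        have hbddv : BddAbove (Set.range fun x : X =>
            (1 / (N : ℝ)) * ∑ i ∈ Finset.range N, F (seqEvol f i x)) := by
          refine ⟨M, ?_⟩
          rintro _ ⟨x, rfl⟩
          show 1 / (N:ℝ) * ∑ i ∈ Finset.range N, F (seqEvol f i x) ≤ M
          have hs : ∑ i ∈ Finset.range N, F (seqEvol f i x) ≤ (N:ℝ) * M := by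
            calc _ ≤ ∑ _i ∈ Finset.range N, M := Finset.sum_le_sum fun i _ => hFleM _
              _ = (N:ℝ) * M := by rw [Finset.sum_const, nsmul_eq_mul, Finset.card_range]
          rw [one_div, ← div_eq_inv_mul, div_le_iff₀ hNpos]
          linarith
        exact h1.trans (le_ciSup hbddv x0)
    have hcb : IsCoboundedUnder (· ≤ ·) atTop v :=
      IsBoundedUnder.isCoboundedUnder_le (isBoundedUnder_of ⟨m, hvlb⟩)
    have hlimv : limsup v atTop ≤ c * M + (1 - c) * M * b := limsup_le_of_le hcb hevv
    have hfin : α * M ≤ c * M + (1 - c) * M * b := le_trans hquasi hlimv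
    have hbr' : (1 - c) * M * b < (1 - c) * M * r :=
      mul_lt_mul_of_pos_left hbr (mul_pos h1c hMpos)
    have hrid : c * M + (1 - c) * M * r = α * M := by
      rw [hr]; field_simp; ring
    linarith
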